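/- Let a < b be integers, w, f : {a,…,b} → ℝ, ψ : [0,1] → [0,1], λ ∈ [0,1], x ∈ {a,…,b}. Define Δξ(t) = ξ(t+1) − ξ(t) and K(t,x) = w(t) − (w(a)+ψ(λ)(w(b)−w(a))/2) for a ≤ t < x, K(t,x) = w(t) − (w(a)+(1+ψ(1−λ))(w(b)−w(a))/2) for x ≤ t ≤ b. Then | [((1+ψ(1−λ)−ψ(λ))/(2(b−a)))·f(x) + (ψ(λ)f(a)+(1−ψ(1−λ))f(b))/(2(b−a))]·Σ_{t=a}^{b−1} Δw(t) − (1/(b−a))·Σ_{t=a}^{b−1} Δw(t)·f(t+1) − ((f(b)−f(a))/(b−a)²)·Σ_{t=a}^{b−1} K(t,x) | ≤ [ (1/(b−a))·Σ_{t=a}^{b−1} K(t,x)² − ((1/(b−a))·Σ_{t=a}^{b−1} K(t,x))² ]^{1/2} · [ (1/(b−a))·Σ_{t=a}^{b−1} (Δf(t))² − ((1/(b−a))·Σ_{t=a}^{b−1} Δf(t))² ]^{1/2}. -/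

import Mathlib

open Finset

lemma tel_int (g : ℤ → ℝ) (p : ℤ) : ∀ q, p ≤ q →
    ∑ t ∈ Ico p q, (g (t+1) - g t) = g q - g p := by
  refine Int.le_induction ?_ ?_
  · simp
  · intro q hq ih
    have h : Ico p (q+1) = insert q (Ico p q) := by
      ext t; simp only [Finset.mem_Ico, Finset.mem_insert]; omega
    rw [h, Finset.sum_insert (by simp), ih]; ring

lemma gruss (s : Finset ℤ) (u v : ℤ → ℝ) (n : ℝ) (hn : 0 < n)
    (hcard : (s.card : ℝ) = n) :
    |(1/n) * ∑ t ∈ s, u t * v t - ((1/n) * ∑ t ∈ s, u t) * ((1/n) * ∑ t ∈ s, v t)|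
      ≤ Real.sqrt ((1/n) * ∑ t ∈ s, (u t)^2 - ((1/n) * ∑ t ∈ s, u t)^2)
        * Real.sqrt ((1/n) * ∑ t ∈ s, (v t)^2 - ((1/n) * ∑ t ∈ s, v t)^2) := by
  have hn0 : n ≠ 0 := ne_of_gt hn
  set ub := (1/n) * ∑ t ∈ s, u t with hub
  set vb := (1/n) * ∑ t ∈ s, v t with hvb
  have hsu : ∑ t ∈ s, u t = n * ub := by rw [hub]; field_simp
  have hsv : ∑ t ∈ s, v t = n * vb := by rw [hvb]; field_simp
  have hsum1 : ∑ t ∈ s, (1:ℝ) = n := by rw [Finset.sum_const]; simpa using hcard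
  have key1 : ∑ t ∈ s, (u t - ub) * (v t - vb)
      = ∑ t ∈ s, u t * v t - n * (ub * vb) := by
    have h : ∑ t ∈ s, (u t - ub) * (v t - vb)
        = ∑ t ∈ s, (u t * v t - ub * v t - vb * u t + (ub * vb) * 1) := by
      apply Finset.sum_congr rfl; intro t _; ring
    rw [h, Finset.sum_add_distrib, Finset.sum_sub_distrib, Finset.sum_sub_distrib,
      ← Finset.mul_sum, ← Finset.mul_sum, ← Finset.mul_sum, hsum1, hsu, hsv]
    ring
  have key2 : ∀ (p : ℤ → ℝ) (pb : ℝ), ∑ t ∈ s, p t = n * pb →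
      ∑ t ∈ s, (p t - pb)^2 = ∑ t ∈ s, (p t)^2 - n * pb^2 := by
    intro p pb hsp
    have h : ∑ t ∈ s, (p t - pb)^2
        = ∑ t ∈ s, ((p t)^2 - (2*pb) * p t + pb^2 * 1) := by
      apply Finset.sum_congr rfl; intro t _; ring
    rw [h, Finset.sum_add_distrib, Finset.sum_sub_distrib, ← Finset.mul_sum,
      ← Finset.mul_sum, hsum1, hsp]
    ring
  have cs := Finset.sum_mul_sq_le_sq_mul_sq s (fun t => u t - ub) (fun t => v t - vb)
  have habs : |∑ t ∈ s, (u t - ub) * (v t - vb)|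
      ≤ Real.sqrt (∑ t ∈ s, (u t - ub)^2) * Real.sqrt (∑ t ∈ s, (v t - vb)^2) := by
    rw [← Real.sqrt_mul (Finset.sum_nonneg fun t _ => sq_nonneg _), ← Real.sqrt_sq_eq_abs]
    exact Real.sqrt_le_sqrt cs
  have e1 : (1/n) * ∑ t ∈ s, u t * v t - ub * vb
      = (1/n) * ∑ t ∈ s, (u t - ub) * (v t - vb) := by
    rw [key1]; field_simp
  have e2 : (1/n) * ∑ t ∈ s, (u t)^2 - ub^2 = (1/n) * ∑ t ∈ s, (u t - ub)^2 := by
    rw [key2 u ub hsu]; field_simp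
  have e3 : (1/n) * ∑ t ∈ s, (v t)^2 - vb^2 = (1/n) * ∑ t ∈ s, (v t - vb)^2 := by
    rw [key2 v vb hsv]; field_simp
  rw [e1, e2, e3]
  have hn' : (0:ℝ) ≤ 1/n := by positivity
  rw [Real.sqrt_mul hn', Real.sqrt_mul hn', abs_mul, abs_of_nonneg hn']
  have hms : (1/n) = Real.sqrt (1/n) * Real.sqrt (1/n) := (Real.mul_self_sqrt hn').symm
  set P := Real.sqrt (∑ t ∈ s, (u t - ub)^2)
  set Q := Real.sqrt (∑ t ∈ s, (v t - vb)^2)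
  calc (1/n) * |∑ t ∈ s, (u t - ub) * (v t - vb)|
      ≤ (1/n) * (P * Q) := mul_le_mul_of_nonneg_left habs hn'
    _ = Real.sqrt (1/n) * P * (Real.sqrt (1/n) * Q) := by
        rw [show Real.sqrt (1/n) * P * (Real.sqrt (1/n) * Q)
            = (Real.sqrt (1/n) * Real.sqrt (1/n)) * (P * Q) from by ring, ← hms]

theorem discrete_ostrowski_gruss
    (a b : ℤ) (hab : a < b) (w f : ℤ → ℝ) (ψ : ℝ → ℝ) (lam : ℝ)
    (hψ : ∀ s ∈ Set.Icc (0:ℝ) 1, ψ s ∈ Set.Icc (0:ℝ) 1)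
    (hlam : lam ∈ Set.Icc (0:ℝ) 1)
    (K : ℤ → ℤ → ℝ)
    (hK : ∀ x, ∀ t, K t x =
      if t < x then w t - (w a + ψ lam * (w b - w a) / 2)
      else w t - (w a + (1 + ψ (1 - lam)) * (w b - w a) / 2)) :
    ∀ x ∈ Set.Icc a b,
      |((1 + ψ (1 - lam) - ψ lam) / (2 * ((b : ℝ) - a)) * f x
            + (ψ lam * f a + (1 - ψ (1 - lam)) * f b) / (2 * ((b : ℝ) - a)))
            * (∑ t ∈ Finset.Ico a b, (w (t + 1) - w t))
          - (1 / ((b : ℝ) - a)) * ∑ t ∈ Finset.Ico a b, (w (t + 1) - w t) * f (t + 1)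
          - (f b - f a) / ((b : ℝ) - a) ^ 2 * ∑ t ∈ Finset.Ico a b, K t x|
        ≤ Real.sqrt ((1 / ((b : ℝ) - a)) * (∑ t ∈ Finset.Ico a b, (K t x) ^ 2)
              - ((1 / ((b : ℝ) - a)) * ∑ t ∈ Finset.Ico a b, K t x) ^ 2)
          * Real.sqrt ((1 / ((b : ℝ) - a)) * (∑ t ∈ Finset.Ico a b, (f (t + 1) - f t) ^ 2)
              - ((1 / ((b : ℝ) - a)) * ∑ t ∈ Finset.Ico a b, (f (t + 1) - f t)) ^ 2) := by
  intro x hx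
  obtain ⟨hax, hxb⟩ := hx
  set n : ℝ := (b : ℝ) - a with hn_def
  have hn : 0 < n := by
    have : (a : ℝ) < b := by exact_mod_cast hab
    linarith
  have hn0 : n ≠ 0 := ne_of_gt hn
  have hcard : ((Finset.Ico a b).card : ℝ) = n := by
    rw [Int.card_Ico, hn_def]
    have h2 : ((b - a).toNat : ℤ) = b - a := Int.toNat_of_nonneg (by omega)
    have h3 : (((b - a).toNat : ℤ) : ℝ) = ((b - a : ℤ) : ℝ) := by exact_mod_cast h2
    push_cast at h3 ⊢
    linarith
  set c₁ : ℝ := w a + ψ lam * (w b - w a) / 2 with hc₁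
  set c₂ : ℝ := w a + (1 + ψ (1 - lam)) * (w b - w a) / 2 with hc₂
  have hK1 : ∀ t ∈ Ico a x, K t x = w t - c₁ := by
    intro t ht
    rw [Finset.mem_Ico] at ht
    rw [hK, if_pos ht.2]
  have hK2 : ∀ t ∈ Ico x b, K t x = w t - c₂ := by
    intro t ht
    rw [Finset.mem_Ico] at ht
    rw [hK, if_neg (not_lt.mpr ht.1)]
  -- splitting lemma
  have hsKg : ∀ g : ℤ → ℝ, ∑ t ∈ Ico a b, K t x * g t =
      (∑ t ∈ Ico a b, w t * g t) - c₁ * ∑ t ∈ Ico a x, g t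
        - c₂ * ∑ t ∈ Ico x b, g t := by
    intro g
    rw [← Finset.Ico_union_Ico_eq_Ico hax hxb,
        Finset.sum_union (Finset.Ico_disjoint_Ico_consecutive a x b),
        Finset.sum_union (Finset.Ico_disjoint_Ico_consecutive a x b)]
    have h1 : ∑ t ∈ Ico a x, K t x * g t
        = ∑ t ∈ Ico a x, w t * g t - c₁ * ∑ t ∈ Ico a x, g t := by
      rw [Finset.mul_sum, ← Finset.sum_sub_distrib]
      apply Finset.sum_congr rfl
      intro t ht; rw [hK1 t ht]; ring
    have h2 : ∑ t ∈ Ico x b, K t x * g t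
        = ∑ t ∈ Ico x b, w t * g t - c₂ * ∑ t ∈ Ico x b, g t := by
      rw [Finset.mul_sum, ← Finset.sum_sub_distrib]
      apply Finset.sum_congr rfl
      intro t ht; rw [hK2 t ht]; ring
    rw [h1, h2]; ring
  have telw : ∑ t ∈ Ico a b, (w (t+1) - w t) = w b - w a := tel_int w a b hab.le
  have telf : ∑ t ∈ Ico a b, (f (t+1) - f t) = f b - f a := tel_int f a b hab.le
  have telfax : ∑ t ∈ Ico a x, (f (t+1) - f t) = f x - f a := tel_int f a x hax
  have telfxb : ∑ t ∈ Ico x b, (f (t+1) - f t) = f b - f x := tel_int f x b hxb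
  have abel : ∑ t ∈ Ico a b, w t * (f (t+1) - f t)
      = w b * f b - w a * f a - ∑ t ∈ Ico a b, (w (t+1) - w t) * f (t+1) := by
    have h := tel_int (fun t => w t * f t) a b hab.le
    have h2 : ∑ t ∈ Ico a b, (w t * (f (t+1) - f t) + (w (t+1) - w t) * f (t+1))
        = w b * f b - w a * f a := by
      rw [← h]
      apply Finset.sum_congr rfl
      intro t _; ring
    rw [Finset.sum_add_distrib] at h2
    linarith
  have hSK : ∑ t ∈ Ico a b, K t x * (f (t+1) - f t)
      = (w b * f b - w a * f a - ∑ t ∈ Ico a b, (w (t+1) - w t) * f (t+1))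
        - c₁ * (f x - f a) - c₂ * (f b - f x) := by
    rw [hsKg (fun t => f (t+1) - f t), telfax, telfxb, abel]
  -- the key identity
  have keyid :
      ((1 + ψ (1 - lam) - ψ lam) / (2 * n) * f x
            + (ψ lam * f a + (1 - ψ (1 - lam)) * f b) / (2 * n))
            * (∑ t ∈ Finset.Ico a b, (w (t + 1) - w t))
          - (1 / n) * ∑ t ∈ Finset.Ico a b, (w (t + 1) - w t) * f (t + 1)
          - (f b - f a) / n ^ 2 * ∑ t ∈ Finset.Ico a b, K t x
      = (1/n) * ∑ t ∈ Ico a b, K t x * (f (t+1) - f t)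
          - ((1/n) * ∑ t ∈ Ico a b, K t x) * ((1/n) * ∑ t ∈ Ico a b, (f (t+1) - f t)) := by
    rw [hSK, telw, telf, hc₁, hc₂]
    field_simp
    ring
  rw [keyid]
  exact gruss (Ico a b) (fun t => K t x) (fun t => f (t+1) - f t) n hn hcard
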